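/- Let S be a finite-valued random vector with D = A(S) for an aggregation function A with A(s) = 0 iff s = 0. Assume Y(s) ⫫ S for all s and Y = Y(S). Define ATT(s) = E[Y(s) − Y(0) | S=s] and AATT(d) = ∑_{s: A(s)=d} P(S=s | D=d)·ATT(s). Then AATT(d) = E[Y | D=d] − E[Y | D=0] for every d with P(D=d) > 0 and P(D=0) > 0. -/

import Mathlib

open Finset

/- Probability of an event, conditional probability `P(A|B)`, and conditional
expectation `E[Y|A]` under a mass function `p` on a finite sample space. -/

open Classical in
noncomputable def Pr {Ω : Type*} [Fintype Ω] (p : Ω → ℝ) (A : Ω → Prop) : ℝ :=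
  ∑ ω, if A ω then p ω else 0

noncomputable def cPr {Ω : Type*} [Fintype Ω] (p : Ω → ℝ) (A B : Ω → Prop) : ℝ :=
  Pr p (fun ω => A ω ∧ B ω) / Pr p B

open Classical in
noncomputable def cexp {Ω : Type*} [Fintype Ω] (p : Ω → ℝ) (Y : Ω → ℝ) (A : Ω → Prop) : ℝ :=
  (∑ ω, if A ω then p ω * Y ω else 0) / Pr p A

open Classical in
/-- Auxiliary: the (unnormalized) weighted sum `E[Y · 1_A]`. -/
noncomputable def wsum {Ω : Type*} [Fintype Ω] (p : Ω → ℝ) (Y : Ω → ℝ) (A : Ω → Prop) : ℝ :=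
  ∑ ω, if A ω then p ω * Y ω else 0

lemma cexp_eq_wsum {Ω : Type*} [Fintype Ω] (p : Ω → ℝ) (Y : Ω → ℝ) (A : Ω → Prop) :
    cexp p Y A = wsum p Y A / Pr p A := rfl

open Classical

lemma Pr_congr' {Ω : Type*} [Fintype Ω] (p : Ω → ℝ) {A B : Ω → Prop}
    (h : ∀ ω, A ω ↔ B ω) : Pr p A = Pr p B := by
  unfold Pr
  exact Finset.sum_congr rfl fun ω _ => by simp only [h ω]

lemma regroup' {Ω : Type*} [Fintype Ω] (p : Ω → ℝ) (f : Ω → ℝ) (A : Ω → Prop) :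
    wsum p f A = ∑ y ∈ univ.image f, y * Pr p (fun ω => f ω = y ∧ A ω) := by
  unfold wsum
  have h1 : ∀ ω : Ω, (if A ω then p ω * f ω else 0)
      = ∑ y ∈ univ.image f, (if f ω = y ∧ A ω then p ω * y else 0) := by
    intro ω
    by_cases h : A ω
    · rw [Finset.sum_eq_single_of_mem (f ω) (Finset.mem_image_of_mem f (Finset.mem_univ ω))]
      · rw [if_pos h, if_pos ⟨rfl, h⟩]
      · intro y _ hne
        rw [if_neg (fun hc => hne hc.1.symm)]
    · rw [if_neg h, Finset.sum_eq_zero]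
      intro y _
      rw [if_neg (fun hc => h hc.2)]
  rw [Finset.sum_congr rfl fun ω _ => h1 ω, Finset.sum_comm]
  refine Finset.sum_congr rfl fun y _ => ?_
  unfold Pr
  rw [Finset.mul_sum]
  refine Finset.sum_congr rfl fun ω _ => ?_
  by_cases h : f ω = y ∧ A ω <;> simp [h, mul_comm]

lemma exp_regroup' {Ω : Type*} [Fintype Ω] (p : Ω → ℝ) (f : Ω → ℝ) :
    (∑ ω, p ω * f ω) = ∑ y ∈ univ.image f, y * Pr p (fun ω => f ω = y) := by
  have h := regroup' p f (fun _ => True)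
  unfold wsum at h
  simpa using h

lemma key_indep' {Ω : Type*} [Fintype Ω] (p : Ω → ℝ) (f : Ω → ℝ) (E : Ω → Prop)
    (hind : ∀ B : Set ℝ,
      Pr p (fun ω => f ω ∈ B ∧ E ω) = Pr p (fun ω => f ω ∈ B) * Pr p E) :
    wsum p f E = (∑ ω, p ω * f ω) * Pr p E := by
  rw [regroup' p f E, exp_regroup' p f, Finset.sum_mul]
  refine Finset.sum_congr rfl fun y _ => ?_
  have h2 : Pr p (fun ω => f ω = y ∧ E ω)
      = Pr p (fun ω => f ω = y) * Pr p E := by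
    have e1 : Pr p (fun ω => f ω ∈ ({y} : Set ℝ) ∧ E ω)
        = Pr p (fun ω => f ω = y ∧ E ω) := Pr_congr' p (fun ω => by simp)
    have e2 : Pr p (fun ω => f ω ∈ ({y} : Set ℝ)) = Pr p (fun ω => f ω = y) :=
      Pr_congr' p (fun ω => by simp)
    rw [← e1, ← e2, hind {y}]
  rw [h2]; ring

/-- Identification of the aggregate ATT: with `D = A(S)`, `A(s) = 0 ↔ s = 0`,
consistency `Y = Y(S)` and independence `Y(s) ⫫ S` for all `s`, the parameter
`AATT(d) = ∑_{s : A(s)=d} P(S=s|D=d)·ATT(s)`, where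
`ATT(s) = E[Y(s) − Y(0) | S=s]`, equals `E[Y|D=d] − E[Y|D=0]` whenever
`P(D=d) > 0` and `P(D=0) > 0`. -/
theorem aatt_identification
    {Ω : Type*} [Fintype Ω] (K : ℕ)
    (p : Ω → ℝ) (hp0 : ∀ ω, 0 ≤ p ω) (hp1 : ∑ ω, p ω = 1)
    (S : Ω → Fin K → ℕ) (A : (Fin K → ℕ) → ℕ) (D : Ω → ℕ)
    (hD : ∀ ω, D ω = A (S ω))
    (hA0 : ∀ s : Fin K → ℕ, A s = 0 ↔ s = 0)
    (Ypot : (Fin K → ℕ) → Ω → ℝ) (Y : Ω → ℝ)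
    (hcons : ∀ ω, Y ω = Ypot (S ω) ω)
    (hindep : ∀ (s v : Fin K → ℕ) (B : Set ℝ),
      Pr p (fun ω => Ypot s ω ∈ B ∧ S ω = v)
        = Pr p (fun ω => Ypot s ω ∈ B) * Pr p (fun ω => S ω = v))
    (d : ℕ) (hPd : 0 < Pr p (fun ω => D ω = d)) (hP0 : 0 < Pr p (fun ω => D ω = 0)) :
    ∑ s ∈ (univ.image S).filter (fun s => A s = d),
        cPr p (fun ω => S ω = s) (fun ω => D ω = d) *
          cexp p (fun ω => Ypot s ω - Ypot 0 ω) (fun ω => S ω = s)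
      = cexp p Y (fun ω => D ω = d) - cexp p Y (fun ω => D ω = 0) := by
  have hPdne : Pr p (fun ω => D ω = d) ≠ 0 := ne_of_gt hPd
  have hP0ne : Pr p (fun ω => D ω = 0) ≠ 0 := ne_of_gt hP0
  set Es : (Fin K → ℕ) → ℝ := fun s => ∑ ω, p ω * Ypot s ω with hEs
  have key : ∀ s v : Fin K → ℕ,
      wsum p (Ypot s) (fun ω => S ω = v) = Es s * Pr p (fun ω => S ω = v) := by
    intro s v
    exact key_indep' p (Ypot s) (fun ω => S ω = v) (fun B => hindep s v B)
  -- per-term identity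
  have hterm : ∀ s ∈ (univ.image S).filter (fun s => A s = d),
      cPr p (fun ω => S ω = s) (fun ω => D ω = d) *
        cexp p (fun ω => Ypot s ω - Ypot 0 ω) (fun ω => S ω = s)
      = Pr p (fun ω => S ω = s) * (Es s - Es 0) / Pr p (fun ω => D ω = d) := by
    intro s hs
    obtain ⟨-, hAs⟩ := Finset.mem_filter.mp hs
    have hPrS : Pr p (fun ω => S ω = s ∧ D ω = d) = Pr p (fun ω => S ω = s) := by
      refine Pr_congr' p fun ω => ?_
      constructor
      · exact fun h => h.1
      · exact fun h => ⟨h, by rw [hD, h]; exact hAs⟩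
    have hnum : wsum p (fun ω => Ypot s ω - Ypot 0 ω) (fun ω => S ω = s)
        = (Es s - Es 0) * Pr p (fun ω => S ω = s) := by
      have hsplit : wsum p (fun ω => Ypot s ω - Ypot 0 ω) (fun ω => S ω = s)
          = wsum p (Ypot s) (fun ω => S ω = s) - wsum p (Ypot 0) (fun ω => S ω = s) := by
        unfold wsum
        rw [← Finset.sum_sub_distrib]
        refine Finset.sum_congr rfl fun ω _ => ?_
        by_cases h : S ω = s <;> simp [h, mul_sub]
      rw [hsplit, key s s, key 0 s, ← sub_mul]
    calc cPr p (fun ω => S ω = s) (fun ω => D ω = d) *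
          cexp p (fun ω => Ypot s ω - Ypot 0 ω) (fun ω => S ω = s)
        = (Pr p (fun ω => S ω = s ∧ D ω = d) / Pr p (fun ω => D ω = d)) *
            (wsum p (fun ω => Ypot s ω - Ypot 0 ω) (fun ω => S ω = s) /
              Pr p (fun ω => S ω = s)) := rfl
      _ = Pr p (fun ω => S ω = s) * (Es s - Es 0) / Pr p (fun ω => D ω = d) := by
          rw [hPrS, hnum]
          by_cases h : Pr p (fun ω => S ω = s) = 0
          · simp [h]
          · field_simp
  rw [Finset.sum_congr rfl hterm]
  -- total probability over fibers
  have hA' : (∑ s ∈ (univ.image S).filter (fun s => A s = d),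
      Pr p (fun ω => S ω = s)) = Pr p (fun ω => D ω = d) := by
    unfold Pr
    rw [Finset.sum_comm]
    refine Finset.sum_congr rfl fun ω _ => ?_
    by_cases h : D ω = d
    · have hmem : S ω ∈ (univ.image S).filter (fun s => A s = d) := by
        simp only [Finset.mem_filter, Finset.mem_image]
        exact ⟨⟨ω, Finset.mem_univ ω, rfl⟩, by rw [← hD]; exact h⟩
      rw [Finset.sum_eq_single_of_mem (S ω) hmem, if_pos rfl, if_pos h]
      intro b _ hb
      rw [if_neg (fun hc => hb hc.symm)]
    · rw [if_neg h, Finset.sum_eq_zero]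
      intro b hb
      obtain ⟨-, hAb⟩ := Finset.mem_filter.mp hb
      refine if_neg (fun hc => h ?_)
      rw [hD, hc]; exact hAb
  -- law of total expectation over fibers
  have hB' : (∑ s ∈ (univ.image S).filter (fun s => A s = d),
      Pr p (fun ω => S ω = s) * Es s) = wsum p Y (fun ω => D ω = d) := by
    have hrw : ∀ s ∈ (univ.image S).filter (fun s => A s = d),
        Pr p (fun ω => S ω = s) * Es s = wsum p (Ypot s) (fun ω => S ω = s) := by
      intro s _; rw [key s s]; ring
    rw [Finset.sum_congr rfl hrw]
    unfold wsum
    rw [Finset.sum_comm]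
    refine Finset.sum_congr rfl fun ω _ => ?_
    by_cases h : D ω = d
    · have hmem : S ω ∈ (univ.image S).filter (fun s => A s = d) := by
        simp only [Finset.mem_filter, Finset.mem_image]
        exact ⟨⟨ω, Finset.mem_univ ω, rfl⟩, by rw [← hD]; exact h⟩
      rw [Finset.sum_eq_single_of_mem (S ω) hmem, if_pos rfl, if_pos h, hcons ω]
      intro b _ hb
      rw [if_neg (fun hc => hb hc.symm)]
    · rw [if_neg h, Finset.sum_eq_zero]
      intro b hb
      obtain ⟨-, hAb⟩ := Finset.mem_filter.mp hb
      refine if_neg (fun hc => h ?_)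
      rw [hD, hc]; exact hAb
  -- the baseline conditional expectation
  have hzero : cexp p Y (fun ω => D ω = 0) = Es 0 := by
    have hiff : ∀ ω, D ω = 0 ↔ S ω = 0 := fun ω => by rw [hD]; exact hA0 (S ω)
    have hPr0 : Pr p (fun ω => D ω = 0) = Pr p (fun ω => S ω = (0 : Fin K → ℕ)) :=
      Pr_congr' p hiff
    have hnum0 : wsum p Y (fun ω => D ω = 0)
        = wsum p (Ypot 0) (fun ω => S ω = (0 : Fin K → ℕ)) := by
      unfold wsum
      refine Finset.sum_congr rfl fun ω _ => ?_
      by_cases h : D ω = 0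
      · have hS0 : S ω = 0 := (hiff ω).mp h
        rw [if_pos h, if_pos hS0, hcons ω, hS0]
      · rw [if_neg h, if_neg (fun hc => h ((hiff ω).mpr hc))]
    rw [cexp_eq_wsum, hnum0, hPr0, key 0 0]
    have hne : Pr p (fun ω => S ω = (0 : Fin K → ℕ)) ≠ 0 := by
      rw [← hPr0]; exact hP0ne
    field_simp
  -- assemble
  have hsum : (∑ s ∈ (univ.image S).filter (fun s => A s = d),
      Pr p (fun ω => S ω = s) * (Es s - Es 0) / Pr p (fun ω => D ω = d))
      = (wsum p Y (fun ω => D ω = d)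
          - Pr p (fun ω => D ω = d) * Es 0) / Pr p (fun ω => D ω = d) := by
    rw [← Finset.sum_div]
    congr 1
    have hmul : ∀ s, Pr p (fun ω => S ω = s) * (Es s - Es 0)
        = Pr p (fun ω => S ω = s) * Es s - Pr p (fun ω => S ω = s) * Es 0 := by
      intro s; ring
    rw [Finset.sum_congr rfl fun s _ => hmul s, Finset.sum_sub_distrib, hB',
      ← Finset.sum_mul, hA']
  rw [hsum, hzero, cexp_eq_wsum]
  field_simp
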